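/- Let A⁺, A⁻ ⊆ ℝⁿ be disjoint finite sets with A⁺ ≠ ∅ and A⁻ ≠ ∅, and set A = A⁺ ∪ A⁻. Then the dual cone of the signed SONC cone C_{(A⁺,A⁻)} consists exactly of those v : A → ℝ with v_α ≥ 0 for all α ∈ A⁺ and such that for every β ∈ A⁻ and every λ ∈ Λ(A⁺,β) one has v_β ≤ ∏_{α∈A⁺} v_α^{λ_α} (real powers, with the convention 0⁰ = 1). -/

import Mathlib

open Finset

/-- The exponential sum with support `A` and coefficient vector `v`. -/
noncomputable def expSum {n : ℕ} (A : Finset (Fin n → ℝ)) (v : (Fin n → ℝ) → ℝ)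
    (x : Fin n → ℝ) : ℝ :=
  ∑ γ ∈ A, v γ * Real.exp (∑ i, x i * γ i)

/-- The signed SONC (= SAGE) cone `C_{(A⁺,A⁻)}`. -/
def InSAGE {n : ℕ} (Ap An : Finset (Fin n → ℝ)) (c : (Fin n → ℝ) → ℝ) : Prop :=
  (∀ α ∈ Ap, 0 ≤ c α) ∧ (∀ β ∈ An, c β ≤ 0) ∧
  ∃ (m : ℕ) (d : Fin m → (Fin n → ℝ) → ℝ),
    (∀ γ ∈ Ap ∪ An, c γ = ∑ i, d i γ) ∧
    (∀ i, ∀ γ₁ ∈ Ap ∪ An, ∀ γ₂ ∈ Ap ∪ An, d i γ₁ < 0 → d i γ₂ < 0 → γ₁ = γ₂) ∧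
    (∀ i, ∀ x : Fin n → ℝ, 0 ≤ expSum (Ap ∪ An) (d i) x)

/-- The dual cone of a set `K` of coefficient vectors on the support `A`. -/
def dualCone {n : ℕ} (A : Finset (Fin n → ℝ)) (K : Set ((Fin n → ℝ) → ℝ)) :
    Set ((Fin n → ℝ) → ℝ) :=
  {v | ∀ c ∈ K, 0 ≤ ∑ γ ∈ A, v γ * c γ}

/-- `Λ(A⁺, β)`: barycentric coordinates of `β` with respect to `A⁺`. -/
def IsBary {n : ℕ} (Ap : Finset (Fin n → ℝ)) (β : Fin n → ℝ) (lam : (Fin n → ℝ) → ℝ) : Prop :=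
  (∀ α ∈ Ap, 0 ≤ lam α) ∧ (∑ α ∈ Ap, lam α = 1) ∧ (∑ α ∈ Ap, lam α • α = β)

namespace DualSage

variable {n : ℕ}

lemma prod_rpow_const {ι : Type*} (s : Finset ι) (f : ι → ℝ) {x : ℝ} (hx : 0 < x) :
    ∏ i ∈ s, x ^ f i = x ^ (∑ i ∈ s, f i) := by
  induction s using Finset.cons_induction with
  | empty => simp
  | cons a s ha ih => rw [Finset.prod_cons, Finset.sum_cons, ih, Real.rpow_add hx]

lemma bary_exponent {Ap : Finset (Fin n → ℝ)} {β : Fin n → ℝ} {lam : (Fin n → ℝ) → ℝ}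
    (hbary : ∑ α ∈ Ap, lam α • α = β) (x : Fin n → ℝ) :
    ∑ α ∈ Ap, lam α * (∑ i, x i * α i) = ∑ i, x i * β i := by
  have h : ∀ i, (∑ α ∈ Ap, lam α * α i) = β i := by
    intro i
    have := congrFun hbary i
    simpa [Finset.sum_apply] using this
  calc ∑ α ∈ Ap, lam α * (∑ i, x i * α i)
      = ∑ α ∈ Ap, ∑ i, x i * (lam α * α i) := by
        refine Finset.sum_congr rfl fun α _ => ?_
        rw [Finset.mul_sum]; refine Finset.sum_congr rfl fun i _ => by ring
    _ = ∑ i, ∑ α ∈ Ap, x i * (lam α * α i) := Finset.sum_comm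
    _ = ∑ i, x i * β i := by
        refine Finset.sum_congr rfl fun i _ => ?_
        rw [← Finset.mul_sum, h i]

/-- The AM/GM exponential construction: pairing inequality from dual membership. -/
lemma key1 {Ap An : Finset (Fin n → ℝ)} (hdisj : Disjoint Ap An)
    {β : Fin n → ℝ} (hβ : β ∈ An) {lam : (Fin n → ℝ) → ℝ} (hlam : IsBary Ap β lam)
    {v : (Fin n → ℝ) → ℝ} (hv : v ∈ dualCone (Ap ∪ An) {c | InSAGE Ap An c})
    (s : (Fin n → ℝ) → ℝ) (hs : ∀ α ∈ Ap, 0 < s α) :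
    v β * ∏ α ∈ Ap, s α ^ lam α ≤ ∑ α ∈ Ap, v α * (lam α * s α) := by
  obtain ⟨hlam0, hlam1, hlamb⟩ := hlam
  set Pr : ℝ := ∏ α ∈ Ap, s α ^ lam α with hPr
  have hPrpos : 0 < Pr := Finset.prod_pos fun α hα => Real.rpow_pos_of_pos (hs α hα) _
  have hβnotAp : β ∉ Ap := fun h => (Finset.disjoint_left.mp hdisj h hβ).elim
  set c : (Fin n → ℝ) → ℝ :=
    fun γ => if γ ∈ Ap then lam γ * s γ else if γ = β then -Pr else 0 with hc
  have hcAp : ∀ γ ∈ Ap, c γ = lam γ * s γ := fun γ hγ => by simp [hc, hγ]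
  have hcAp0 : ∀ γ ∈ Ap, 0 ≤ c γ := fun γ hγ => by
    rw [hcAp γ hγ]; exact mul_nonneg (hlam0 γ hγ) (hs γ hγ).le
  have hcAn : ∀ γ ∈ An, c γ = if γ = β then -Pr else 0 := by
    intro γ hγ
    have : γ ∉ Ap := fun h => (Finset.disjoint_left.mp hdisj h hγ).elim
    simp [hc, this]
  have hexp : ∀ x : Fin n → ℝ, 0 ≤ expSum (Ap ∪ An) c x := by
    intro x
    have hsplit : expSum (Ap ∪ An) c x
        = (∑ α ∈ Ap, (lam α * s α) * Real.exp (∑ i, x i * α i))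
          + (- Pr * Real.exp (∑ i, x i * β i)) := by
      rw [expSum, Finset.sum_union hdisj]
      congr 1
      · exact Finset.sum_congr rfl fun α hα => by rw [hcAp α hα]
      · rw [show (∑ γ ∈ An, c γ * Real.exp (∑ i, x i * γ i))
            = ∑ γ ∈ An, if γ = β then -Pr * Real.exp (∑ i, x i * γ i) else 0 from
          Finset.sum_congr rfl fun γ hγ => by rw [hcAn γ hγ]; split <;> simp]
        rw [Finset.sum_ite_eq' An β fun γ => -Pr * Real.exp (∑ i, x i * γ i)]
        simp [hβ]
    rw [hsplit]
    have hamgm := Real.geom_mean_le_arith_mean_weighted Ap lam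
        (fun α => s α * Real.exp (∑ i, x i * α i)) hlam0 hlam1
        (fun α hα => mul_nonneg (hs α hα).le (Real.exp_pos _).le)
    have hlhs : (∏ α ∈ Ap, (s α * Real.exp (∑ i, x i * α i)) ^ lam α)
        = Pr * Real.exp (∑ i, x i * β i) := by
      have : ∀ α ∈ Ap, (s α * Real.exp (∑ i, x i * α i)) ^ lam α
          = s α ^ lam α * Real.exp ((∑ i, x i * α i) * lam α) := by
        intro α hα
        rw [Real.mul_rpow (hs α hα).le (Real.exp_pos _).le, ← Real.exp_mul]
      rw [Finset.prod_congr rfl this, Finset.prod_mul_distrib, ← Real.exp_sum]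
      have harg : ∑ α ∈ Ap, (∑ i, x i * α i) * lam α
          = ∑ i, x i * β i := by
        rw [← bary_exponent hlamb x]
        exact Finset.sum_congr rfl fun α _ => mul_comm _ _
      rw [harg]
    rw [hlhs] at hamgm
    have heq : ∑ α ∈ Ap, lam α * (s α * Real.exp (∑ i, x i * α i))
        = ∑ α ∈ Ap, (lam α * s α) * Real.exp (∑ i, x i * α i) :=
      Finset.sum_congr rfl fun α _ => by ring
    rw [heq] at hamgm
    linarith
  have hsage : InSAGE Ap An c := by
    refine ⟨hcAp0, ?_, 1, fun _ => c, ?_, ?_, fun _ x => hexp x⟩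
    · intro γ hγ
      rw [hcAn γ hγ]; split
      · linarith
      · exact le_refl 0
    · intro γ _
      simp
    · intro _ γ₁ h₁ γ₂ h₂ hn₁ hn₂
      have e₁ : γ₁ = β := by
        by_cases hA : γ₁ ∈ Ap
        · exact absurd hn₁ (not_lt.mpr (hcAp0 γ₁ hA))
        · by_contra hne
          simp [hc, hA, hne] at hn₁
      have e₂ : γ₂ = β := by
        by_cases hA : γ₂ ∈ Ap
        · exact absurd hn₂ (not_lt.mpr (hcAp0 γ₂ hA))
        · by_contra hne
          simp [hc, hA, hne] at hn₂
      rw [e₁, e₂]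
  have hpair := hv c hsage
  have hsplit : ∑ γ ∈ Ap ∪ An, v γ * c γ
      = (∑ α ∈ Ap, v α * (lam α * s α)) + (- (v β * Pr)) := by
    rw [Finset.sum_union hdisj]
    congr 1
    · exact Finset.sum_congr rfl fun α hα => by rw [hcAp α hα]
    · rw [show (∑ γ ∈ An, v γ * c γ)
          = ∑ γ ∈ An, if γ = β then v γ * -Pr else 0 from
        Finset.sum_congr rfl fun γ hγ => by rw [hcAn γ hγ]; split <;> simp]
      rw [Finset.sum_ite_eq' An β fun γ => v γ * -Pr]
      simp [hβ, mul_neg]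
  rw [hsplit] at hpair
  linarith


-- appended after c1 content (namespace DualSage open)
lemma dual_nonneg_Ap {Ap An : Finset (Fin n → ℝ)} (hdisj : Disjoint Ap An)
    {v : (Fin n → ℝ) → ℝ} (hv : v ∈ dualCone (Ap ∪ An) {c | InSAGE Ap An c})
    {α : Fin n → ℝ} (hα : α ∈ Ap) : 0 ≤ v α := by
  classical
  set c : (Fin n → ℝ) → ℝ := fun γ => if γ = α then 1 else 0 with hc
  have hc0 : ∀ γ, 0 ≤ c γ := fun γ => by simp [hc]; split <;> norm_num
  have hsage : InSAGE Ap An c := by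
    refine ⟨fun γ _ => hc0 γ, ?_, 1, fun _ => c, ?_, ?_, ?_⟩
    · intro γ hγ
      have : γ ≠ α := fun h => Finset.disjoint_left.mp hdisj hα (h ▸ hγ)
      simp [hc, this]
    · intro γ _; simp
    · intro _ γ₁ _ γ₂ _ hn₁ _
      exact absurd hn₁ (not_lt.mpr (hc0 γ₁))
    · intro _ x
      exact Finset.sum_nonneg fun γ _ => mul_nonneg (hc0 γ) (Real.exp_pos _).le
  have hpair := hv c hsage
  have : ∑ γ ∈ Ap ∪ An, v γ * c γ = v α := by
    rw [show (∑ γ ∈ Ap ∪ An, v γ * c γ) = ∑ γ ∈ Ap ∪ An, if γ = α then v γ else 0 from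
      Finset.sum_congr rfl fun γ _ => by by_cases h : γ = α <;> simp [hc, h]]
    rw [Finset.sum_ite_eq' (Ap ∪ An) α fun γ => v γ]
    simp [Finset.mem_union, hα]
  linarith [this ▸ hpair]

lemma dual_bary_bound {Ap An : Finset (Fin n → ℝ)} (hdisj : Disjoint Ap An)
    {v : (Fin n → ℝ) → ℝ} (hv : v ∈ dualCone (Ap ∪ An) {c | InSAGE Ap An c})
    {β : Fin n → ℝ} (hβ : β ∈ An) {lam : (Fin n → ℝ) → ℝ} (hlam : IsBary Ap β lam) :
    v β ≤ ∏ α ∈ Ap, v α ^ lam α := by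
  classical
  have hva : ∀ α ∈ Ap, 0 ≤ v α := fun α hα => dual_nonneg_Ap hdisj hv hα
  by_cases hz : ∃ α₀ ∈ Ap, 0 < lam α₀ ∧ v α₀ = 0
  · obtain ⟨α₀, hα₀, hl₀, hv₀⟩ := hz
    have hprod : (∏ α ∈ Ap, v α ^ lam α) = 0 :=
      Finset.prod_eq_zero hα₀ (by rw [hv₀, Real.zero_rpow hl₀.ne'])
    rw [hprod]
    by_contra hvb
    push_neg at hvb
    set K : ℝ := ∑ α ∈ Ap, v α * lam α with hK
    have hK0 : 0 ≤ K := Finset.sum_nonneg fun α hα =>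
      mul_nonneg (hva α hα) (hlam.1 α hα)
    set t : ℝ := ((K + 1) / v β) ^ (lam α₀)⁻¹ with ht
    have htpos : 0 < t := Real.rpow_pos_of_pos (by positivity) _
    set s : (Fin n → ℝ) → ℝ := fun α => if α = α₀ then t else 1 with hsdef
    have hkey := key1 hdisj hβ hlam hv s (fun α _ => by
      simp only [hsdef]; split <;> [exact htpos; norm_num])
    have hprods : (∏ α ∈ Ap, s α ^ lam α) = (K + 1) / v β := by
      rw [Finset.prod_eq_single_of_mem α₀ hα₀ (fun b _ hb => by
        simp [hsdef, hb, Real.one_rpow])]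
      simp only [hsdef, if_pos rfl, ht]
      exact Real.rpow_inv_rpow (by positivity) hl₀.ne'
    have hrhs : (∑ α ∈ Ap, v α * (lam α * s α)) = K := by
      rw [hK]
      refine Finset.sum_congr rfl fun α hα => ?_
      by_cases h : α = α₀
      · subst h; rw [hv₀]; ring
      · simp [hsdef, h]
    rw [hprods, hrhs] at hkey
    rw [mul_div_cancel₀ _ (ne_of_gt hvb)] at hkey
    linarith
  · push_neg at hz
    have hvpos : ∀ α ∈ Ap, 0 < lam α → 0 < v α := fun α hα hl =>
      lt_of_le_of_ne (hva α hα) (Ne.symm (hz α hα hl))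
    set Pv : ℝ := ∏ α ∈ Ap, v α ^ lam α with hPv
    have hPvpos : 0 < Pv := by
      refine Finset.prod_pos fun α hα => ?_
      rcases (hlam.1 α hα).lt_or_eq with h | h
      · exact Real.rpow_pos_of_pos (hvpos α hα h) _
      · rw [← h, Real.rpow_zero]; norm_num
    set s : (Fin n → ℝ) → ℝ := fun α => if 0 < lam α then Pv / v α else 1 with hsdef
    have hspos : ∀ α ∈ Ap, 0 < s α := by
      intro α hα
      by_cases h : 0 < lam α
      · simp only [hsdef, if_pos h]
        exact div_pos hPvpos (hvpos α hα h)
      · simp only [hsdef, if_neg h]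
        norm_num
    have hkey := key1 hdisj hβ hlam hv s hspos
    have hprods : (∏ α ∈ Ap, s α ^ lam α) = 1 := by
      have hfac : ∀ α ∈ Ap, s α ^ lam α = Pv ^ lam α / v α ^ lam α := by
        intro α hα
        rcases (hlam.1 α hα).lt_or_eq with h | h
        · simp only [hsdef, if_pos h]
          exact Real.div_rpow hPvpos.le (hva α hα) _
        · rw [← h]
          simp [Real.rpow_zero]
      rw [Finset.prod_congr rfl hfac, Finset.prod_div_distrib,
        prod_rpow_const Ap lam hPvpos, hlam.2.1, Real.rpow_one, ← hPv,
        div_self hPvpos.ne']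
    have hrhs : (∑ α ∈ Ap, v α * (lam α * s α)) = Pv := by
      have : ∀ α ∈ Ap, v α * (lam α * s α) = lam α * Pv := by
        intro α hα
        rcases (hlam.1 α hα).lt_or_eq with h | h
        · simp only [hsdef, if_pos h]
          field_simp [(hvpos α hα h).ne']
        · rw [← h]; ring
      rw [Finset.sum_congr rfl this, ← Finset.sum_mul, hlam.2.1, one_mul]
    rw [hprods, hrhs, mul_one] at hkey
    exact hkey
open RealInnerProductSpace in
lemma exists_minimizer (S : Finset (Fin n → ℝ)) (hSne : S.Nonempty)
    (w : (Fin n → ℝ) → EuclideanSpace ℝ (Fin n)) (d : (Fin n → ℝ) → ℝ)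
    (hd : ∀ α ∈ S, 0 < d α)
    (hB : ∀ u : EuclideanSpace ℝ (Fin n), (∀ α ∈ S, ⟪u, w α⟫ ≤ 0) → ∀ α ∈ S, ⟪u, w α⟫ = 0) :
    ∃ z ∈ Submodule.span ℝ (w '' ↑S), ∀ y ∈ Submodule.span ℝ (w '' ↑S),
      (∑ α ∈ S, d α * Real.exp ⟪z, w α⟫) ≤ ∑ α ∈ S, d α * Real.exp ⟪y, w α⟫ := by
  classical
  set L : Submodule ℝ (EuclideanSpace ℝ (Fin n)) := Submodule.span ℝ (w '' ↑S) with hL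
  set G : ↥L → ℝ := fun y => ∑ α ∈ S, d α * Real.exp ⟪(y : EuclideanSpace ℝ (Fin n)), w α⟫
    with hG
  have hGcont : Continuous G := by
    refine continuous_finset_sum _ fun α _ => ?_
    exact continuous_const.mul (Real.continuous_exp.comp
      (continuous_subtype_val.inner continuous_const))
  by_cases htr : ∀ y : ↥L, y = (0 : ↥L)
  · refine ⟨0, L.zero_mem, fun y hy => ?_⟩
    have h0 : (⟨y, hy⟩ : ↥L) = 0 := htr _
    have hy0 : y = 0 := by
      have := congrArg (Subtype.val) h0
      simpa using this
    rw [hy0]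
  · push_neg at htr
    obtain ⟨y₀, hy₀⟩ := htr
    set g : ↥L → ℝ := fun y => S.sup' hSne
      (fun α => ⟪(y : EuclideanSpace ℝ (Fin n)), w α⟫) with hg
    have hgcont : Continuous g := by
      rw [continuous_iff_continuousAt]
      intro y
      exact Filter.Tendsto.finset_sup'_nhds_apply hSne fun α _ =>
        ((continuous_subtype_val.inner continuous_const).tendsto y)
    have hy₀n : ‖y₀‖ ≠ 0 := fun h => hy₀ (norm_eq_zero.mp h)
    have hsne : (Metric.sphere (0 : ↥L) 1).Nonempty := by
      refine ⟨‖y₀‖⁻¹ • y₀, ?_⟩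
      rw [Metric.mem_sphere, dist_zero_right, norm_smul, norm_inv, norm_norm]
      exact inv_mul_cancel₀ hy₀n
    obtain ⟨y₁, hy₁s, hy₁min⟩ := (isCompact_sphere (0 : ↥L) 1).exists_isMinOn hsne
      hgcont.continuousOn
    have hy₁norm : ‖y₁‖ = 1 := by
      rw [Metric.mem_sphere, dist_zero_right] at hy₁s
      exact hy₁s
    set cst : ℝ := g y₁ with hcst
    have hcpos : 0 < cst := by
      by_contra hle
      push_neg at hle
      have hall : ∀ α ∈ S, ⟪((y₁ : ↥L) : EuclideanSpace ℝ (Fin n)), w α⟫ ≤ 0 := by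
        intro α hα
        exact le_trans (Finset.le_sup'
          (fun α => ⟪((y₁ : ↥L) : EuclideanSpace ℝ (Fin n)), w α⟫) hα) hle
      have hzero := hB _ hall
      have hforall : ∀ v ∈ Submodule.span ℝ (w '' ↑S),
          ⟪((y₁ : ↥L) : EuclideanSpace ℝ (Fin n)), v⟫ = (0:ℝ) := by
        intro v hv
        induction hv using Submodule.span_induction with
        | mem v hv =>
          obtain ⟨α, hα, rfl⟩ := hv
          exact hzero α hα
        | zero => exact inner_zero_right _
        | add v₁ v₂ _ _ h₁ h₂ => rw [inner_add_right, h₁, h₂, add_zero]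
        | smul a v _ h => rw [real_inner_smul_right, h, mul_zero]
      have hself : ⟪((y₁ : ↥L) : EuclideanSpace ℝ (Fin n)),
          ((y₁ : ↥L) : EuclideanSpace ℝ (Fin n))⟫ = (0:ℝ) := hforall _ y₁.2
      have : ((y₁ : ↥L) : EuclideanSpace ℝ (Fin n)) = 0 := inner_self_eq_zero.mp hself
      have : ‖y₁‖ = 0 := by
        rw [← norm_eq_zero] at this ⊢
        simpa using this
      rw [hy₁norm] at this
      norm_num at this
    set dmin : ℝ := S.inf' hSne d with hdmin
    have hdminpos : 0 < dmin := (Finset.lt_inf'_iff _).mpr hd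
    have hterm : ∀ (y : ↥L), ∀ α ∈ S,
        0 ≤ d α * Real.exp ⟪(y : EuclideanSpace ℝ (Fin n)), w α⟫ := fun y α hα =>
      mul_nonneg (hd α hα).le (Real.exp_pos _).le
    have hlow : ∀ y : ↥L, dmin * Real.exp (cst * ‖y‖) ≤ G y := by
      intro y
      by_cases hy : y = 0
      · subst hy
        obtain ⟨ah, hah⟩ := hSne
        have h1 : dmin * Real.exp (cst * ‖(0 : ↥L)‖) = dmin := by
          simp
        rw [h1]
        calc dmin ≤ d ah := Finset.inf'_le _ hah
          _ = d ah * Real.exp ⟪((0:↥L) : EuclideanSpace ℝ (Fin n)), w ah⟫ := by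
              have : ((0:↥L) : EuclideanSpace ℝ (Fin n)) = 0 := rfl
              rw [this, inner_zero_left, Real.exp_zero, mul_one]
          _ ≤ G 0 := Finset.single_le_sum (hterm 0) hah
      · have hyn : ‖y‖ ≠ 0 := fun h => hy (norm_eq_zero.mp h)
        have hynpos : 0 < ‖y‖ := lt_of_le_of_ne (norm_nonneg y) (Ne.symm hyn)
        set yh : ↥L := ‖y‖⁻¹ • y with hyh
        have hyhs : yh ∈ Metric.sphere (0 : ↥L) 1 := by
          rw [Metric.mem_sphere, dist_zero_right, hyh, norm_smul, norm_inv, norm_norm]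
          exact inv_mul_cancel₀ hyn
        have hcle : cst ≤ g yh := hy₁min hyhs
        obtain ⟨αm, hαm, hsupeq⟩ := Finset.exists_mem_eq_sup' hSne
          (fun α => ⟪(yh : EuclideanSpace ℝ (Fin n)), w α⟫)
        have hyhα : cst ≤ ⟪(yh : EuclideanSpace ℝ (Fin n)), w αm⟫ := by
          rw [← hsupeq]
          exact hcle
        have hrec : (y : EuclideanSpace ℝ (Fin n)) = ‖y‖ • (yh : EuclideanSpace ℝ (Fin n)) := by
          rw [hyh]
          have : ((‖y‖⁻¹ • y : ↥L) : EuclideanSpace ℝ (Fin n))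
              = ‖y‖⁻¹ • (y : EuclideanSpace ℝ (Fin n)) := rfl
          rw [this, smul_smul, mul_inv_cancel₀ hyn, one_smul]
        have hinner : cst * ‖y‖ ≤ ⟪(y : EuclideanSpace ℝ (Fin n)), w αm⟫ := by
          rw [hrec, real_inner_smul_left]
          calc cst * ‖y‖ = ‖y‖ * cst := mul_comm _ _
            _ ≤ ‖y‖ * ⟪(yh : EuclideanSpace ℝ (Fin n)), w αm⟫ :=
              mul_le_mul_of_nonneg_left hyhα (norm_nonneg _)
        calc dmin * Real.exp (cst * ‖y‖)
            ≤ d αm * Real.exp ⟪(y : EuclideanSpace ℝ (Fin n)), w αm⟫ := by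
              refine mul_le_mul (Finset.inf'_le _ hαm) (Real.exp_le_exp.mpr hinner)
                (Real.exp_pos _).le (hd αm hαm).le
          _ ≤ G y := Finset.single_le_sum (hterm y) hαm
    set K : Set ↥L := {y : ↥L | G y ≤ G 0} with hK
    have hKclosed : IsClosed K := isClosed_le hGcont continuous_const
    have hKsub : K ⊆ Metric.closedBall (0 : ↥L) (cst⁻¹ * Real.log (G 0 / dmin)) := by
      intro y hy
      rw [Metric.mem_closedBall, dist_zero_right]
      have h1 : dmin * Real.exp (cst * ‖y‖) ≤ G 0 := le_trans (hlow y) hy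
      have h2 : Real.exp (cst * ‖y‖) ≤ G 0 / dmin := by
        rw [le_div_iff₀ hdminpos]
        linarith
      have hG0pos : 0 < G 0 :=
        Finset.sum_pos (fun α hα => mul_pos (hd α hα) (Real.exp_pos _)) hSne
      have h3 : cst * ‖y‖ ≤ Real.log (G 0 / dmin) := by
        rw [Real.le_log_iff_exp_le (div_pos hG0pos hdminpos)]
        exact h2
      calc ‖y‖ = cst⁻¹ * (cst * ‖y‖) := by field_simp
        _ ≤ cst⁻¹ * Real.log (G 0 / dmin) :=
          mul_le_mul_of_nonneg_left h3 (by positivity)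
    have hKcomp : IsCompact K := Metric.isCompact_of_isClosed_isBounded hKclosed
      (Metric.isBounded_closedBall.subset hKsub)
    have hK0 : (0 : ↥L) ∈ K := by
      simp only [hK, Set.mem_setOf_eq]
      exact le_rfl
    obtain ⟨z₀, hz₀K, hz₀min⟩ := hKcomp.exists_isMinOn ⟨0, hK0⟩ hGcont.continuousOn
    refine ⟨(z₀ : EuclideanSpace ℝ (Fin n)), z₀.2, fun y hy => ?_⟩
    have hglobal : ∀ yy : ↥L, G z₀ ≤ G yy := by
      intro yy
      by_cases hyyK : yy ∈ K
      · exact hz₀min hyyK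
      · exact le_trans (hz₀K) (le_of_lt (not_le.mp hyyK))
    exact hglobal ⟨y, hy⟩
open RealInnerProductSpace Filter Topology in
/-- Converse AM/GM: a positive lower bound for a positive exponential sum yields barycentric
coordinates certifying the bound. -/
lemma camgm : ∀ (S : Finset (Fin n → ℝ)) (β : Fin n → ℝ) (d : (Fin n → ℝ) → ℝ) (b : ℝ),
    0 < b → (∀ α ∈ S, 0 < d α) →
    (∀ x : Fin n → ℝ, b ≤ ∑ α ∈ S, d α * Real.exp (∑ i, x i * (α i - β i))) →
    ∃ lam : (Fin n → ℝ) → ℝ, (∀ α ∈ S, 0 ≤ lam α) ∧ (∑ α ∈ S, lam α) = 1 ∧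
      (∑ α ∈ S, lam α • α) = β ∧ b ≤ ∏ α ∈ S, (d α / lam α) ^ lam α := by
  classical
  intro S
  induction S using Finset.strongInduction with
  | _ S ih =>
    intro β d b hb hd hF
    by_cases hA : ∃ u : Fin n → ℝ, (∀ α ∈ S, (∑ i, u i * (α i - β i)) ≤ 0) ∧
        ∃ α ∈ S, (∑ i, u i * (α i - β i)) < 0
    · -- a recession direction exists: strip the escaping part of the support
      obtain ⟨u, hu1, α₀, hα₀S, hα₀⟩ := hA
      set S' := S.filter (fun α => (∑ i, u i * (α i - β i)) = 0) with hS'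
      have hsub : S' ⊂ S := Finset.filter_ssubset.mpr ⟨α₀, hα₀S, by
        intro h; exact absurd h (ne_of_lt hα₀)⟩
      have hF' : ∀ x : Fin n → ℝ, b ≤ ∑ α ∈ S', d α * Real.exp (∑ i, x i * (α i - β i)) := by
        intro x
        have hexp : ∀ (t : ℝ) (α : Fin n → ℝ),
            (∑ i, (x i + t * u i) * (α i - β i))
              = (∑ i, x i * (α i - β i)) + t * (∑ i, u i * (α i - β i)) := by
          intro t α
          rw [Finset.mul_sum, ← Finset.sum_add_distrib]
          exact Finset.sum_congr rfl fun i _ => by ring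
        have hg : ∀ t : ℝ, b ≤ ∑ α ∈ S,
            d α * Real.exp ((∑ i, x i * (α i - β i)) + t * (∑ i, u i * (α i - β i))) := by
          intro t
          have := hF (fun i => x i + t * u i)
          rw [Finset.sum_congr rfl fun α _ => by rw [hexp t α]] at this
          exact this
        have hsplit : ∀ t : ℝ, (∑ α ∈ S,
              d α * Real.exp ((∑ i, x i * (α i - β i)) + t * (∑ i, u i * (α i - β i))))
            = (∑ α ∈ S', d α * Real.exp (∑ i, x i * (α i - β i)))
              + ∑ α ∈ S \ S',
                  d α * Real.exp ((∑ i, x i * (α i - β i)) + t * (∑ i, u i * (α i - β i))) := by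
          intro t
          rw [← Finset.sum_sdiff
            (Finset.filter_subset (fun α => (∑ i, u i * (α i - β i)) = 0) S)]
          rw [add_comm]
          congr 1
          refine Finset.sum_congr rfl fun α hα => ?_
          have hz : (∑ i, u i * (α i - β i)) = 0 := (Finset.mem_filter.mp hα).2
          rw [hz, mul_zero, add_zero]
        have htend2 : Tendsto (fun t : ℝ => ∑ α ∈ S \ S',
            d α * Real.exp ((∑ i, x i * (α i - β i)) + t * (∑ i, u i * (α i - β i))))
            atTop (𝓝 (∑ α ∈ S \ S', (0:ℝ))) := by
          refine tendsto_finset_sum _ fun α hα => ?_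
          obtain ⟨hαS, hα'⟩ := Finset.mem_sdiff.mp hα
          have hlt : (∑ i, u i * (α i - β i)) < 0 := by
            rcases lt_or_eq_of_le (hu1 α hαS) with h | h
            · exact h
            · exact absurd (Finset.mem_filter.mpr ⟨hαS, h⟩) hα'
          have h1 : Tendsto (fun t : ℝ =>
              (∑ i, x i * (α i - β i)) + t * (∑ i, u i * (α i - β i))) atTop atBot := by
            apply Filter.tendsto_atBot_add_const_left
            exact tendsto_id.atTop_mul_const_of_neg hlt
          have h2 := (Real.tendsto_exp_atBot).comp h1
          have h3 := h2.const_mul (d α)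
          simpa using h3
        have htend : Tendsto (fun t : ℝ => ∑ α ∈ S,
            d α * Real.exp ((∑ i, x i * (α i - β i)) + t * (∑ i, u i * (α i - β i))))
            atTop (𝓝 ((∑ α ∈ S', d α * Real.exp (∑ i, x i * (α i - β i)))
              + ∑ α ∈ S \ S', (0:ℝ))) :=
          (tendsto_const_nhds.add htend2).congr (fun t => (hsplit t).symm)
        have hfin := ge_of_tendsto' htend hg
        simpa using hfin
      obtain ⟨lam, hl0, hl1, hlb, hli⟩ := ih S' hsub β d b hb
        (fun α hα => hd α (Finset.filter_subset _ _ hα)) hF'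
      refine ⟨fun α => if α ∈ S' then lam α else 0, ?_, ?_, ?_, ?_⟩
      · intro α hα
        by_cases h : α ∈ S' <;> simp [h]
        exact hl0 α h
      · rw [← hl1]
        rw [Finset.sum_ite_mem, Finset.inter_eq_right.mpr (Finset.filter_subset _ _)]
      · rw [← hlb]
        have : ∀ α ∈ S, (if α ∈ S' then lam α else 0) • α
            = if α ∈ S' then lam α • α else 0 := by
          intro α _; by_cases h : α ∈ S' <;> simp [h]
        rw [Finset.sum_congr rfl this, Finset.sum_ite_mem,
          Finset.inter_eq_right.mpr (Finset.filter_subset _ _)]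
      · refine le_trans hli (le_of_eq ?_)
        rw [← Finset.prod_subset (Finset.filter_subset (fun α => (∑ i, u i * (α i - β i)) = 0) S)
          (fun α _ hα => by have hα' : α ∉ S' := hα; simp [hα'])]
        exact Finset.prod_congr rfl fun α hα => by have hα' : α ∈ S' := hα; simp [hα']
    · -- no recession direction: the infimum is attained
      push_neg at hA
      have hB : ∀ u : Fin n → ℝ, (∀ α ∈ S, (∑ i, u i * (α i - β i)) ≤ 0) →
          ∀ α ∈ S, (∑ i, u i * (α i - β i)) = 0 := by
        intro u hu α hα
        exact le_antisymm (hu α hα) (hA u hu α hα)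
      have hSne : S.Nonempty := by
        rcases S.eq_empty_or_nonempty with h | h
        · exfalso; have := hF 0; rw [h] at this; simp at this; linarith
        · exact h
      set w : (Fin n → ℝ) → EuclideanSpace ℝ (Fin n) :=
        fun α => WithLp.toLp 2 (fun i => α i - β i : Fin n → ℝ) with hw
      have hip : ∀ (u : EuclideanSpace ℝ (Fin n)) (α : Fin n → ℝ),
          ⟪u, w α⟫ = ∑ i, u i * (α i - β i) := by
        intro u α
        simp [hw, PiLp.inner_apply, RCLike.inner_apply, mul_comm]
      set L : Submodule ℝ (EuclideanSpace ℝ (Fin n)) := Submodule.span ℝ (w '' ↑S) with hL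
      have hwL : ∀ α ∈ S, w α ∈ L := fun α hα =>
        Submodule.subset_span (by simpa using Finset.mem_image_of_mem w hα)
      -- the objective function on the subspace
      set F : EuclideanSpace ℝ (Fin n) → ℝ :=
        fun y => ∑ α ∈ S, d α * Real.exp ⟪y, w α⟫ with hFdef
      have hFcont : Continuous F := by
        refine continuous_finset_sum _ fun α _ => ?_
        exact continuous_const.mul (Real.continuous_exp.comp
          (continuous_id.inner continuous_const))
      have hFb : ∀ y : EuclideanSpace ℝ (Fin n), b ≤ F y := by
        intro y
        have := hF (fun i => y i)
        rw [hFdef]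
        have heq : ∀ α ∈ S, d α * Real.exp (∑ i, y i * (α i - β i))
            = d α * Real.exp ⟪y, w α⟫ := by
          intro α _
          rw [hip y α]
        rw [Finset.sum_congr rfl heq] at this
        exact this
      have hFpos : ∀ y, 0 < F y := fun y => lt_of_lt_of_le hb (hFb y)
      -- existence of a minimiser of F on L
      have hmin := exists_minimizer S hSne w d hd (fun u hu α hα => by
        rw [hip u α]
        refine hB (fun i => u i) (fun α' hα' => ?_) α hα
        · rw [← hip u α']
          exact hu α' hα')
      obtain ⟨z, hzL, hzmin⟩ := hmin
      rw [← hL] at hzL hzmin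
      have hzmin : ∀ y ∈ L, F z ≤ F y := hzmin
      -- first-order conditions
      have hderiv : ∀ u : EuclideanSpace ℝ (Fin n), u ∈ L →
          (∑ α ∈ S, d α * Real.exp ⟪z, w α⟫ * ⟪u, w α⟫) = 0 := by
        intro u huL
        set φ : ℝ → ℝ := fun t => ∑ α ∈ S, d α * Real.exp (⟪z, w α⟫ + t * ⟪u, w α⟫) with hφ
        have hφmin : ∀ t, φ 0 ≤ φ t := by
          intro t
          have h1 : φ t = F (z + t • u) := by
            rw [hφ, hFdef]
            refine Finset.sum_congr rfl fun α _ => ?_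
            rw [inner_add_left, real_inner_smul_left]
          have h0 : φ 0 = F z := by
            rw [hφ, hFdef]
            refine Finset.sum_congr rfl fun α _ => by norm_num
          rw [h1, h0]
          exact hzmin _ (L.add_mem hzL (L.smul_mem t huL))
        have hder : HasDerivAt φ (∑ α ∈ S, d α * Real.exp ⟪z, w α⟫ * ⟪u, w α⟫) 0 := by
          have : HasDerivAt φ
              (∑ α ∈ S, d α * (Real.exp (⟪z, w α⟫ + 0 * ⟪u, w α⟫) * ⟪u, w α⟫)) 0 := by
            refine HasDerivAt.fun_sum fun α _ => ?_
            have h1 : HasDerivAt (fun t : ℝ => ⟪z, w α⟫ + t * ⟪u, w α⟫) ⟪u, w α⟫ 0 := by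
              simpa using ((hasDerivAt_id (0:ℝ)).mul_const ⟪u, w α⟫).const_add ⟪z, w α⟫
            exact (h1.exp).const_mul (d α)
          refine this.congr_deriv ?_
          refine Finset.sum_congr rfl fun α _ => by norm_num; ring
        have hloc : IsLocalMin φ 0 := Filter.Eventually.of_forall fun t => hφmin t
        exact hloc.hasDerivAt_eq_zero hder
      -- construct the barycentric coordinates
      set Fz : ℝ := F z with hFz
      have hFzpos : 0 < Fz := hFpos z
      set lam : (Fin n → ℝ) → ℝ := fun α => d α * Real.exp ⟪z, w α⟫ / Fz with hlam
      have hlampos : ∀ α ∈ S, 0 < lam α := fun α hα =>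
        div_pos (mul_pos (hd α hα) (Real.exp_pos _)) hFzpos
      have hlam1 : (∑ α ∈ S, lam α) = 1 := by
        rw [hlam, ← Finset.sum_div]
        rw [hFz, hFdef]
        exact div_self hFzpos.ne'
      -- the barycenter property
      set W : EuclideanSpace ℝ (Fin n) := ∑ α ∈ S, lam α • w α with hW
      have hWL : W ∈ L := Submodule.sum_smul_mem L lam hwL
      have hWip : ∀ v : EuclideanSpace ℝ (Fin n), ⟪v, W⟫ = ∑ α ∈ S, lam α * ⟪v, w α⟫ := by
        intro v
        rw [hW, inner_sum]
        exact Finset.sum_congr rfl fun α _ => real_inner_smul_right _ _ _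
      have hWzero : W = 0 := by
        have h1 : (∑ α ∈ S, lam α * ⟪W, w α⟫) = 0 := by
          have h2 := hderiv W hWL
          have h3 : ∀ α ∈ S, lam α * ⟪W, w α⟫
              = (d α * Real.exp ⟪z, w α⟫ * ⟪W, w α⟫) / Fz := by
            intro α _
            rw [hlam]; ring
          rw [Finset.sum_congr rfl h3, ← Finset.sum_div, h2, zero_div]
        have h4 : ⟪W, W⟫ = (0:ℝ) := by rw [hWip W]; exact h1
        exact inner_self_eq_zero.mp h4
      have hbary : (∑ α ∈ S, lam α • α) = β := by
        funext i
        have h5 : (∑ α ∈ S, lam α • w α) i = ∑ α ∈ S, lam α * (α i - β i) := by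
          rw [WithLp.ofLp_sum, Finset.sum_apply]
          exact Finset.sum_congr rfl fun α _ => rfl
        have h6 : (∑ α ∈ S, lam α * (α i - β i)) = 0 := by
          rw [← h5, ← hW, hWzero]; rfl
        have h7 : (∑ α ∈ S, lam α * α i) = β i := by
          have : (∑ α ∈ S, lam α * (α i - β i))
              = (∑ α ∈ S, lam α * α i) - (∑ α ∈ S, lam α) * β i := by
            rw [Finset.sum_mul, ← Finset.sum_sub_distrib]
            exact Finset.sum_congr rfl fun α _ => by ring
          rw [this, hlam1, one_mul] at h6
          linarith
        rw [Finset.sum_apply]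
        exact h7
      refine ⟨lam, fun α hα => (hlampos α hα).le, hlam1, hbary, ?_⟩
      -- value of the product
      have hzW : (∑ α ∈ S, lam α * ⟪z, w α⟫) = 0 := by
        rw [← hWip z, hWzero, inner_zero_right]
      have hprod : (∏ α ∈ S, (d α / lam α) ^ lam α) = Fz := by
        have hfac : ∀ α ∈ S, (d α / lam α) ^ lam α
            = Fz ^ lam α * Real.exp (-(⟪z, w α⟫ * lam α)) := by
          intro α hα
          have hda : d α / lam α = Fz * Real.exp (-⟪z, w α⟫) := by
            rw [hlam, Real.exp_neg]
            field_simp [(hd α hα).ne', (Real.exp_pos ⟪z, w α⟫).ne', hFzpos.ne']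
          rw [hda, Real.mul_rpow hFzpos.le (Real.exp_pos _).le, ← Real.exp_mul]
          ring_nf
        rw [Finset.prod_congr rfl hfac, Finset.prod_mul_distrib,
          prod_rpow_const S lam hFzpos, hlam1, Real.rpow_one, ← Real.exp_sum]
        have hzero : (∑ α ∈ S, -(⟪z, w α⟫ * lam α)) = 0 := by
          have h9 : (∑ α ∈ S, -(⟪z, w α⟫ * lam α)) = -(∑ α ∈ S, lam α * ⟪z, w α⟫) := by
            rw [← Finset.sum_neg_distrib]
            exact Finset.sum_congr rfl fun α _ => by ring
          rw [h9, hzW, neg_zero]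
        rw [hzero, Real.exp_zero, mul_one]
      rw [hprod]
      exact hFb z
/-- Pairing of a "clean" AGE piece with an admissible dual vector is nonnegative. -/
lemma piece_nonneg {Ap An : Finset (Fin n → ℝ)} (hdisj : Disjoint Ap An)
    {v : (Fin n → ℝ) → ℝ}
    (hv0 : ∀ γ, 0 ≤ v γ)
    (hvc : ∀ β ∈ An, ∀ lam : (Fin n → ℝ) → ℝ, IsBary Ap β lam →
      v β ≤ ∏ α ∈ Ap, v α ^ lam α)
    (p : (Fin n → ℝ) → ℝ)
    (hpAp : ∀ α ∈ Ap, 0 ≤ p α) (hpAn : ∀ β ∈ An, p β ≤ 0)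
    (huniq : ∀ γ₁ ∈ Ap ∪ An, ∀ γ₂ ∈ Ap ∪ An, p γ₁ < 0 → p γ₂ < 0 → γ₁ = γ₂)
    (hexp : ∀ x : Fin n → ℝ, 0 ≤ expSum (Ap ∪ An) p x) :
    0 ≤ ∑ γ ∈ Ap ∪ An, v γ * p γ := by
  classical
  rw [Finset.sum_union hdisj]
  have hApnn : ∀ α ∈ Ap, 0 ≤ v α * p α := fun α hα =>
    mul_nonneg (hv0 α) (hpAp α hα)
  by_cases hz : ∀ β ∈ An, p β = 0
  · have h1 : (∑ β ∈ An, v β * p β) = 0 :=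
      Finset.sum_eq_zero fun β hβ => by rw [hz β hβ, mul_zero]
    rw [h1, add_zero]
    exact Finset.sum_nonneg hApnn
  · push_neg at hz
    obtain ⟨β₀, hβ₀, hpβ₀ne⟩ := hz
    have hpβ₀ : p β₀ < 0 := lt_of_le_of_ne (hpAn β₀ hβ₀) hpβ₀ne
    have hAn0 : ∀ β ∈ An, β ≠ β₀ → p β = 0 := by
      intro β hβ hne
      by_contra h
      have hlt : p β < 0 := lt_of_le_of_ne (hpAn β hβ) h
      exact hne (huniq β (Finset.mem_union_right _ hβ) β₀ (Finset.mem_union_right _ hβ₀)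
        hlt hpβ₀)
    have hAnsum : (∑ β ∈ An, v β * p β) = v β₀ * p β₀ := by
      refine Finset.sum_eq_single β₀ (fun β hβ hne => by rw [hAn0 β hβ hne, mul_zero])
        (fun h => absurd hβ₀ h)
    rw [hAnsum]
    set S : Finset (Fin n → ℝ) := Ap.filter (fun α => 0 < p α) with hS
    have hSsub : S ⊆ Ap := Finset.filter_subset _ _
    have hSpos : ∀ α ∈ S, 0 < p α := fun α hα => (Finset.mem_filter.mp hα).2
    set b : ℝ := -p β₀ with hb
    have hbpos : 0 < b := by rw [hb]; linarith
    have hcamhyp : ∀ x : Fin n → ℝ,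
        b ≤ ∑ α ∈ S, p α * Real.exp (∑ i, x i * (α i - β₀ i)) := by
      intro x
      have h0 := hexp x
      rw [expSum, Finset.sum_union hdisj] at h0
      have hAnpart : (∑ γ ∈ An, p γ * Real.exp (∑ i, x i * γ i))
          = p β₀ * Real.exp (∑ i, x i * β₀ i) := by
        refine Finset.sum_eq_single β₀ (fun β hβ hne => by rw [hAn0 β hβ hne, zero_mul])
          (fun h => absurd hβ₀ h)
      have hAppart : (∑ γ ∈ Ap, p γ * Real.exp (∑ i, x i * γ i))
          = ∑ α ∈ S, p α * Real.exp (∑ i, x i * α i) := by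
        symm
        refine Finset.sum_subset hSsub fun α hα hα' => ?_
        have : p α = 0 := by
          have h1 := hpAp α hα
          by_contra h2
          exact hα' (Finset.mem_filter.mpr ⟨hα, lt_of_le_of_ne h1 (Ne.symm h2)⟩)
        rw [this, zero_mul]
      rw [hAnpart, hAppart] at h0
      have hmul : b * Real.exp (∑ i, x i * β₀ i) * Real.exp (-(∑ i, x i * β₀ i))
          ≤ (∑ α ∈ S, p α * Real.exp (∑ i, x i * α i)) * Real.exp (-(∑ i, x i * β₀ i)) := by
        refine mul_le_mul_of_nonneg_right ?_ (Real.exp_pos _).le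
        rw [hb]; linarith
      rw [mul_assoc, ← Real.exp_add, add_neg_cancel, Real.exp_zero, mul_one] at hmul
      refine le_trans hmul (le_of_eq ?_)
      rw [Finset.sum_mul]
      refine Finset.sum_congr rfl fun α _ => ?_
      rw [mul_assoc, ← Real.exp_add]
      congr 2
      rw [← Finset.sum_neg_distrib, ← Finset.sum_add_distrib]
      exact Finset.sum_congr rfl fun i _ => by ring
    obtain ⟨lam, hl0, hl1, hlb, hli⟩ := camgm S β₀ p b hbpos hSpos hcamhyp
    set lamE : (Fin n → ℝ) → ℝ := fun α => if α ∈ S then lam α else 0 with hlamE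
    have hbary : IsBary Ap β₀ lamE := by
      refine ⟨fun α _ => ?_, ?_, ?_⟩
      · by_cases h : α ∈ S <;> simp [hlamE, h]
        exact hl0 α h
      · rw [← hl1]
        rw [Finset.sum_ite_mem, Finset.inter_eq_right.mpr hSsub]
      · rw [← hlb]
        have : ∀ α ∈ Ap, lamE α • α = if α ∈ S then lam α • α else 0 := by
          intro α _; by_cases h : α ∈ S <;> simp [hlamE, h]
        rw [Finset.sum_congr rfl this, Finset.sum_ite_mem, Finset.inter_eq_right.mpr hSsub]
    have hvb : v β₀ ≤ ∏ α ∈ S, v α ^ lam α := by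
      refine le_trans (hvc β₀ hβ₀ lamE hbary) (le_of_eq ?_)
      rw [← Finset.prod_subset hSsub (fun α _ hα => by simp [hlamE, hα, Real.rpow_zero])]
      exact Finset.prod_congr rfl fun α hα => by simp [hlamE, hα]
    -- weighted AM/GM with the dual weights
    set z : (Fin n → ℝ) → ℝ := fun α => if lam α = 0 then 0 else v α * p α / lam α with hzdef
    have hznn : ∀ α ∈ S, 0 ≤ z α := by
      intro α hα
      by_cases h : lam α = 0 <;> simp [hzdef, h]
      exact div_nonneg (mul_nonneg (hv0 α) (hSpos α hα).le) (hl0 α hα)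
    have hgm := Real.geom_mean_le_arith_mean_weighted S lam z hl0 hl1 hznn
    have hfac : ∀ α ∈ S, z α ^ lam α = (p α / lam α) ^ lam α * v α ^ lam α := by
      intro α hα
      by_cases h : lam α = 0
      · simp [hzdef, h, Real.rpow_zero]
      · have hlpos : 0 < lam α := lt_of_le_of_ne (hl0 α hα) (Ne.symm h)
        have h1 : z α = p α / lam α * v α := by
          simp only [hzdef, if_neg h]; ring
        rw [h1, Real.mul_rpow (div_nonneg (hSpos α hα).le hlpos.le) (hv0 α)]
    have harith : (∑ α ∈ S, lam α * z α) ≤ ∑ α ∈ S, v α * p α := by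
      refine Finset.sum_le_sum fun α hα => ?_
      by_cases h : lam α = 0
      · simp [hzdef, h]
        exact mul_nonneg (hv0 α) (hSpos α hα).le
      · simp only [hzdef, if_neg h]
        rw [mul_div_cancel₀ _ h]
    have hSAp : (∑ α ∈ S, v α * p α) ≤ ∑ α ∈ Ap, v α * p α :=
      Finset.sum_le_sum_of_subset_of_nonneg hSsub fun α hα _ => hApnn α hα
    have hprodnn : 0 ≤ ∏ α ∈ S, (p α / lam α) ^ lam α :=
      Finset.prod_nonneg fun α hα => Real.rpow_nonneg
        (by
          by_cases h : lam α = 0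
          · simp [h]
          · exact (div_nonneg (hSpos α hα).le (hl0 α hα))) _
    have hchain : b * v β₀ ≤ ∑ α ∈ Ap, v α * p α := by
      calc b * v β₀ ≤ (∏ α ∈ S, (p α / lam α) ^ lam α) * (∏ α ∈ S, v α ^ lam α) :=
            mul_le_mul hli hvb (hv0 β₀) hprodnn
        _ = ∏ α ∈ S, z α ^ lam α := by
            rw [← Finset.prod_mul_distrib]
            exact (Finset.prod_congr rfl hfac).symm
        _ ≤ ∑ α ∈ S, lam α * z α := hgm
        _ ≤ ∑ α ∈ S, v α * p α := harith
        _ ≤ ∑ α ∈ Ap, v α * p α := hSAp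
    have : b * v β₀ = -(v β₀ * p β₀) := by rw [hb]; ring
    linarith [hchain, this ▸ hchain]
lemma multiset_sum_nonneg (m : Multiset ℝ) (h : ∀ a ∈ m, 0 ≤ a) : 0 ≤ m.sum := by
  induction m using Multiset.induction with
  | empty => simp
  | cons a s ih =>
    rw [Multiset.sum_cons]
    have h1 := h a (Multiset.mem_cons_self a s)
    have h2 := ih fun b hb => h b (Multiset.mem_cons_of_mem hb)
    linarith

lemma multiset_sum_nonpos (m : Multiset ℝ) (h : ∀ a ∈ m, a ≤ 0) : m.sum ≤ 0 := by
  induction m using Multiset.induction with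
  | empty => simp
  | cons a s ih =>
    rw [Multiset.sum_cons]
    have h1 := h a (Multiset.mem_cons_self a s)
    have h2 := ih fun b hb => h b (Multiset.mem_cons_of_mem hb)
    linarith

lemma multiset_sum_neg (m : Multiset ℝ) (hne : m ≠ 0) (h : ∀ a ∈ m, a < 0) : m.sum < 0 := by
  obtain ⟨a, ha⟩ := Multiset.exists_mem_of_ne_zero hne
  rw [← Multiset.cons_erase ha, Multiset.sum_cons]
  have h2 : (m.erase a).sum ≤ 0 := multiset_sum_nonpos _ fun b hb =>
    (h b (Multiset.mem_of_mem_erase hb)).le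
  have := h a ha
  linarith

lemma multiset_sum_map_add {X : Type*} (m : Multiset X) (f g : X → ℝ) :
    (m.map (fun a => f a + g a)).sum = (m.map f).sum + (m.map g).sum := by
  induction m using Multiset.induction with
  | empty => simp
  | cons a s ih => simp [Multiset.map_cons, Multiset.sum_cons, ih]; ring

lemma multiset_sum_map_mulright {X : Type*} (m : Multiset X) (f : X → ℝ) (r : ℝ) :
    (m.map (fun a => f a * r)).sum = (m.map f).sum * r := by
  induction m using Multiset.induction with
  | empty => simp
  | cons a s ih => simp [Multiset.map_cons, Multiset.sum_cons, ih]; ring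

/-- Linear pointwise functional of a pointwise multiset sum. -/
lemma multiset_pointwise (A : Finset (Fin n → ℝ)) (g : (Fin n → ℝ) → ℝ → ℝ)
    (hadd : ∀ γ a b, g γ (a + b) = g γ a + g γ b) (h0 : ∀ γ, g γ 0 = 0)
    (l : Multiset ((Fin n → ℝ) → ℝ)) :
    (∑ γ ∈ A, g γ ((l.map (fun p => p γ)).sum)) = (l.map (fun p => ∑ γ ∈ A, g γ (p γ))).sum := by
  induction l using Multiset.induction with
  | empty => simp [h0]
  | cons p s ih =>
    simp only [Multiset.map_cons, Multiset.sum_cons]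
    rw [← ih, ← Finset.sum_add_distrib]
    exact Finset.sum_congr rfl fun γ _ => hadd γ _ _

lemma expSum_addMul (A : Finset (Fin n → ℝ)) (p q : (Fin n → ℝ) → ℝ) (t : ℝ) (x : Fin n → ℝ) :
    expSum A (fun γ => p γ + t * q γ) x = expSum A p x + t * expSum A q x := by
  rw [expSum, expSum, expSum, Finset.mul_sum, ← Finset.sum_add_distrib]
  exact Finset.sum_congr rfl fun γ _ => by ring

lemma expSum_smul (A : Finset (Fin n → ℝ)) (p : (Fin n → ℝ) → ℝ) (t : ℝ) (x : Fin n → ℝ) :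
    expSum A (fun γ => t * p γ) x = t * expSum A p x := by
  rw [expSum, expSum, Finset.mul_sum]
  exact Finset.sum_congr rfl fun γ _ => by ring

lemma pr_addMul (A : Finset (Fin n → ℝ)) (v p q : (Fin n → ℝ) → ℝ) (t : ℝ) :
    (∑ γ ∈ A, v γ * (p γ + t * q γ)) = (∑ γ ∈ A, v γ * p γ) + t * ∑ γ ∈ A, v γ * q γ := by
  rw [Finset.mul_sum, ← Finset.sum_add_distrib]
  exact Finset.sum_congr rfl fun γ _ => by ring

lemma pr_smul (A : Finset (Fin n → ℝ)) (v p : (Fin n → ℝ) → ℝ) (t : ℝ) :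
    (∑ γ ∈ A, v γ * (t * p γ)) = t * ∑ γ ∈ A, v γ * p γ := by
  rw [Finset.mul_sum]
  exact Finset.sum_congr rfl fun γ _ => by ring

/-- Phase 2: absorb pieces with a negative entry at a point of `Ap`. -/
lemma M2 {Ap An : Finset (Fin n → ℝ)} (hdisj : Disjoint Ap An)
    {v : (Fin n → ℝ) → ℝ} (hv0 : ∀ γ, 0 ≤ v γ)
    (hvc : ∀ β ∈ An, ∀ lam : (Fin n → ℝ) → ℝ, IsBary Ap β lam →
      v β ≤ ∏ α ∈ Ap, v α ^ lam α)
    {c : (Fin n → ℝ) → ℝ} (hcAp : ∀ α ∈ Ap, 0 ≤ c α) :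
    ∀ (C : Finset (Fin n → ℝ)), C ⊆ Ap → ∀ l : Multiset ((Fin n → ℝ) → ℝ),
    (∀ p ∈ l, (∀ γ₁ ∈ Ap ∪ An, ∀ γ₂ ∈ Ap ∪ An, p γ₁ < 0 → p γ₂ < 0 → γ₁ = γ₂)
        ∧ (∀ x : Fin n → ℝ, 0 ≤ expSum (Ap ∪ An) p x)) →
    (∀ γ ∈ Ap ∪ An, (l.map (fun p => p γ)).sum = c γ) →
    (∀ p ∈ l, ∀ β ∈ An, p β ≤ 0) →
    (∀ p ∈ l, ∀ α ∈ Ap, α ∉ C → 0 ≤ p α) →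
    0 ≤ (l.map (fun p => ∑ γ ∈ Ap ∪ An, v γ * p γ)).sum := by
  classical
  intro C
  induction C using Finset.strongInduction with
  | _ C ihC =>
    intro hCsub l h1 h2 h3 h4
    rcases C.eq_empty_or_nonempty with rfl | ⟨α₀, hα₀C⟩
    · refine multiset_sum_nonneg _ fun a ha => ?_
      obtain ⟨p, hp, rfl⟩ := Multiset.mem_map.mp ha
      exact piece_nonneg hdisj hv0 hvc p
        (fun α hα => h4 p hp α hα (Finset.notMem_empty α))
        (h3 p hp) (h1 p hp).1 (h1 p hp).2
    · have hα₀Ap : α₀ ∈ Ap := hCsub hα₀C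
      have hα₀A : α₀ ∈ Ap ∪ An := Finset.mem_union_left _ hα₀Ap
      set ln : Multiset ((Fin n → ℝ) → ℝ) := l.filter (fun p => p α₀ < 0) with hln
      set lrest : Multiset ((Fin n → ℝ) → ℝ) := l.filter (fun p => ¬ p α₀ < 0) with hlrest
      set lp : Multiset ((Fin n → ℝ) → ℝ) := lrest.filter (fun p => 0 < p α₀) with hlp
      set lz : Multiset ((Fin n → ℝ) → ℝ) := lrest.filter (fun p => ¬ 0 < p α₀) with hlz
      have hlsplit : ln + (lp + lz) = l := by
        rw [hlp, hlz, Multiset.filter_add_not, hln, hlrest, Multiset.filter_add_not]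
      have hlnl : ∀ p ∈ ln, p ∈ l := fun p hp => Multiset.mem_of_mem_filter hp
      have hlpl : ∀ p ∈ lp, p ∈ l := fun p hp =>
        Multiset.mem_of_mem_filter (Multiset.mem_of_mem_filter hp)
      have hlzl : ∀ p ∈ lz, p ∈ l := fun p hp =>
        Multiset.mem_of_mem_filter (Multiset.mem_of_mem_filter hp)
      by_cases hlnz : ln = 0
      · refine ihC (C.erase α₀) (Finset.erase_ssubset hα₀C)
          ((Finset.erase_subset _ _).trans hCsub) l h1 h2 h3 ?_
        intro p hp α hα hαC
        by_cases hα' : α = α₀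
        · subst hα'
          have : ¬ p α < 0 := by
            intro hneg
            have : p ∈ ln := Multiset.mem_filter.mpr ⟨hp, hneg⟩
            rw [hlnz] at this
            exact absurd this (Multiset.notMem_zero p)
          linarith [not_lt.mp this]
        · exact h4 p hp α hα fun hC' => hαC (Finset.mem_erase.mpr ⟨hα', hC'⟩)
      · -- there are pieces with a negative entry at α₀; absorb them
        set T : ℝ := -(ln.map (fun p => p α₀)).sum with hT
        have hTpos : 0 < T := by
          rw [hT, neg_pos]
          refine multiset_sum_neg _ (fun h => hlnz (by simpa using h)) ?_
          intro a ha
          obtain ⟨p, hp, rfl⟩ := Multiset.mem_map.mp ha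
          exact (Multiset.mem_filter.mp hp).2
        set P : ℝ := (lp.map (fun p => p α₀)).sum with hP
        have hlzero : ∀ p ∈ lz, p α₀ = 0 := by
          intro p hp
          have h1' := (Multiset.mem_filter.mp hp).2
          have h2' := (Multiset.mem_filter.mp (Multiset.mem_filter.mp hp).1).2
          linarith [not_lt.mp h1', not_lt.mp h2']
        have hsumα₀ : (l.map (fun p => p α₀)).sum = c α₀ := h2 α₀ hα₀A
        have hPT : T ≤ P := by
          have hc0 : 0 ≤ c α₀ := hcAp α₀ hα₀Ap
          have : (l.map (fun p => p α₀)).sum = -T + (P + 0) := by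
            rw [← hlsplit]
            rw [Multiset.map_add, Multiset.map_add, Multiset.sum_add, Multiset.sum_add]
            congr 1
            · rw [hT, neg_neg]
            · congr 1
              refine Multiset.sum_eq_zero ?_
              intro a ha
              obtain ⟨p, hp, rfl⟩ := Multiset.mem_map.mp ha
              exact hlzero p hp
          rw [this] at hsumα₀
          linarith
        have hPpos : 0 < P := lt_of_lt_of_le hTpos hPT
        set q : (Fin n → ℝ) → ℝ := fun γ => (ln.map (fun p => p γ)).sum with hq
        have hqα₀ : q α₀ = -T := by rw [hq, hT, neg_neg]
        have hqnneg : ∀ γ ∈ Ap ∪ An, γ ≠ α₀ → 0 ≤ q γ := by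
          intro γ hγ hne
          refine multiset_sum_nonneg _ fun a ha => ?_
          obtain ⟨p, hp, rfl⟩ := Multiset.mem_map.mp ha
          by_contra hneg
          push_neg at hneg
          exact hne ((h1 p (hlnl p hp)).1 γ hγ α₀ hα₀A hneg (Multiset.mem_filter.mp hp).2)
        have hqAn : ∀ β ∈ An, q β = 0 := by
          intro β hβ
          have hβne : β ≠ α₀ := by
            intro h
            exact Finset.disjoint_left.mp hdisj hα₀Ap (h ▸ hβ)
          refine le_antisymm ?_ (hqnneg β (Finset.mem_union_right _ hβ) hβne)
          refine multiset_sum_nonpos _ fun a ha => ?_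
          obtain ⟨p, hp, rfl⟩ := Multiset.mem_map.mp ha
          exact h3 p (hlnl p hp) β hβ
        have hqexp : ∀ x : Fin n → ℝ, 0 ≤ expSum (Ap ∪ An) q x := by
          intro x
          rw [show expSum (Ap ∪ An) q x
              = (ln.map (fun p => expSum (Ap ∪ An) p x)).sum from
            multiset_pointwise (Ap ∪ An) (fun γ t => t * Real.exp (∑ i, x i * γ i))
              (fun γ a b => by ring) (fun γ => by ring) ln]
          exact multiset_sum_nonneg _ fun a ha => by
            obtain ⟨p, hp, rfl⟩ := Multiset.mem_map.mp ha
            exact (h1 p (hlnl p hp)).2 x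
        -- the transformed pieces
        set f : ((Fin n → ℝ) → ℝ) → ((Fin n → ℝ) → ℝ) :=
          fun e => fun γ => e γ + (e α₀ * P⁻¹) * q γ with hf
        set l' : Multiset ((Fin n → ℝ) → ℝ) := lp.map f + lz with hl'
        have hl'mem : ∀ p' ∈ l', (∃ e ∈ lp, p' = f e) ∨ p' ∈ lz := by
          intro p' hp'
          rcases Multiset.mem_add.mp hp' with h | h
          · obtain ⟨e, he, rfl⟩ := Multiset.mem_map.mp h
            exact Or.inl ⟨e, he, rfl⟩
          · exact Or.inr h
        have hcoef : ∀ e ∈ lp, 0 ≤ e α₀ * P⁻¹ := by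
          intro e he
          have : 0 < e α₀ := (Multiset.mem_filter.mp he).2
          positivity
        have hfα₀ : ∀ e ∈ lp, 0 ≤ f e α₀ := by
          intro e he
          have hepos : 0 < e α₀ := (Multiset.mem_filter.mp he).2
          have : f e α₀ = e α₀ * (1 - T * P⁻¹) := by
            rw [hf]
            simp only []
            rw [hqα₀]
            ring
          rw [this]
          have h1' : T * P⁻¹ ≤ 1 := by
            rw [← div_eq_mul_inv, div_le_one hPpos]
            exact hPT
          nlinarith
        have hfuniq : ∀ e ∈ lp, ∀ γ₁ ∈ Ap ∪ An, ∀ γ₂ ∈ Ap ∪ An,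
            f e γ₁ < 0 → f e γ₂ < 0 → γ₁ = γ₂ := by
          intro e he γ₁ hγ₁ γ₂ hγ₂ hn₁ hn₂
          have key : ∀ γ ∈ Ap ∪ An, f e γ < 0 → e γ < 0 := by
            intro γ hγ hneg
            have hγne : γ ≠ α₀ := by
              intro hh
              subst hh
              linarith [hfα₀ e he]
            have hqγ : 0 ≤ q γ := hqnneg γ hγ hγne
            have hcoef' := hcoef e he
            have : e γ ≤ f e γ := by
              rw [hf]
              simp only []
              nlinarith
            linarith
          exact (h1 e (hlpl e he)).1 γ₁ hγ₁ γ₂ hγ₂ (key γ₁ hγ₁ hn₁) (key γ₂ hγ₂ hn₂)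
        have hfexp : ∀ e ∈ lp, ∀ x : Fin n → ℝ, 0 ≤ expSum (Ap ∪ An) (f e) x := by
          intro e he x
          rw [hf]
          rw [show expSum (Ap ∪ An) (fun γ => e γ + (e α₀ * P⁻¹) * q γ) x
              = expSum (Ap ∪ An) e x + (e α₀ * P⁻¹) * expSum (Ap ∪ An) q x from
            expSum_addMul _ _ _ _ _]
          have := (h1 e (hlpl e he)).2 x
          have h2' := hqexp x
          have h3' := hcoef e he
          nlinarith
        have hmain := ihC (C.erase α₀) (Finset.erase_ssubset hα₀C)
          ((Finset.erase_subset _ _).trans hCsub) l' ?_ ?_ ?_ ?_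
        · -- transfer the conclusion back to `l`
          have hpr : (l'.map (fun p => ∑ γ ∈ Ap ∪ An, v γ * p γ)).sum
              = (l.map (fun p => ∑ γ ∈ Ap ∪ An, v γ * p γ)).sum := by
            have hprq : (∑ γ ∈ Ap ∪ An, v γ * q γ)
                = (ln.map (fun p => ∑ γ ∈ Ap ∪ An, v γ * p γ)).sum :=
              multiset_pointwise (Ap ∪ An) (fun γ t => v γ * t)
                (fun γ a b => by ring) (fun γ => by ring) ln
            rw [hl', Multiset.map_add, Multiset.sum_add, Multiset.map_map]
            rw [show ((fun p => ∑ γ ∈ Ap ∪ An, v γ * p γ) ∘ f)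
                = fun e => (∑ γ ∈ Ap ∪ An, v γ * e γ)
                    + (fun e' => e' α₀) e * (P⁻¹ * ∑ γ ∈ Ap ∪ An, v γ * q γ) from ?_]
            · rw [multiset_sum_map_add]
              rw [show (fun e : (Fin n → ℝ) → ℝ =>
                  (fun e' => e' α₀) e * (P⁻¹ * ∑ γ ∈ Ap ∪ An, v γ * q γ))
                  = fun e : (Fin n → ℝ) → ℝ =>
                    (fun e' : (Fin n → ℝ) → ℝ => e' α₀) e
                      * (P⁻¹ * ∑ γ ∈ Ap ∪ An, v γ * q γ) from rfl]
              rw [multiset_sum_map_mulright]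
              rw [← hP]
              rw [show P * (P⁻¹ * ∑ γ ∈ Ap ∪ An, v γ * q γ) = ∑ γ ∈ Ap ∪ An, v γ * q γ from by
                field_simp]
              rw [hprq]
              rw [← hlsplit, Multiset.map_add, Multiset.map_add, Multiset.sum_add,
                Multiset.sum_add]
              ring
            · funext e
              simp only [Function.comp_apply, hf]
              rw [pr_addMul]
              ring
          rw [← hpr]
          exact hmain
        · intro p' hp'
          rcases hl'mem p' hp' with ⟨e, he, rfl⟩ | h
          · exact ⟨hfuniq e he, hfexp e he⟩
          · exact h1 p' (hlzl p' h)
        · intro γ hγ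
          rw [hl', Multiset.map_add, Multiset.sum_add, Multiset.map_map]
          rw [show ((fun p => p γ) ∘ f) = fun e : (Fin n → ℝ) → ℝ =>
              e γ + (fun e' : (Fin n → ℝ) → ℝ => e' α₀) e * (P⁻¹ * q γ) from by
            funext e; simp only [Function.comp_apply, hf]; ring]
          rw [multiset_sum_map_add]
          rw [show (fun e : (Fin n → ℝ) → ℝ =>
              (fun e' : (Fin n → ℝ) → ℝ => e' α₀) e * (P⁻¹ * q γ))
              = fun e : (Fin n → ℝ) → ℝ =>
                (fun e' : (Fin n → ℝ) → ℝ => e' α₀) e * (P⁻¹ * q γ) from rfl]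
          rw [multiset_sum_map_mulright, ← hP]
          rw [show P * (P⁻¹ * q γ) = q γ from by field_simp]
          rw [← h2 γ hγ, ← hlsplit, Multiset.map_add, Multiset.map_add,
            Multiset.sum_add, Multiset.sum_add]
          rw [hq]
          ring
        · intro p' hp' β hβ
          rcases hl'mem p' hp' with ⟨e, he, rfl⟩ | h
          · rw [hf]
            simp only []
            rw [hqAn β hβ, mul_zero, add_zero]
            exact h3 e (hlpl e he) β hβ
          · exact h3 p' (hlzl p' h) β hβ
        · intro p' hp' α hα hαC
          by_cases hα' : α = α₀
          · subst hα'
            rcases hl'mem p' hp' with ⟨e, he, rfl⟩ | h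
            · exact hfα₀ e he
            · rw [hlzero p' h]
          · have hαC' : α ∉ C := fun hC' => hαC (Finset.mem_erase.mpr ⟨hα', hC'⟩)
            rcases hl'mem p' hp' with ⟨e, he, rfl⟩ | h
            · rw [hf]
              simp only []
              have h1' := h4 e (hlpl e he) α hα hαC'
              have h2' := hqnneg α (Finset.mem_union_left _ hα) hα'
              have h3' := hcoef e he
              nlinarith
            · exact h4 p' (hlzl p' h) α hα hαC'
lemma mem_of_rest {X : Type*} {a b : X} {rest l : Multiset X} (h : l = a ::ₘ b ::ₘ rest)
    {p : X} (hp : p ∈ rest) : p ∈ l := by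
  rw [h]
  exact Multiset.mem_cons_of_mem (Multiset.mem_cons_of_mem hp)

/-- Phase 1: clean positive entries at points of `An`, then invoke phase 2. -/
lemma M1 {Ap An : Finset (Fin n → ℝ)} (hdisj : Disjoint Ap An)
    {v : (Fin n → ℝ) → ℝ} (hv0 : ∀ γ, 0 ≤ v γ)
    (hvc : ∀ β ∈ An, ∀ lam : (Fin n → ℝ) → ℝ, IsBary Ap β lam →
      v β ≤ ∏ α ∈ Ap, v α ^ lam α)
    {c : (Fin n → ℝ) → ℝ} (hcAp : ∀ α ∈ Ap, 0 ≤ c α) (hcAn : ∀ β ∈ An, c β ≤ 0) :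
    ∀ (B : Finset (Fin n → ℝ)), B ⊆ An → ∀ l : Multiset ((Fin n → ℝ) → ℝ),
    (∀ p ∈ l, (∀ γ₁ ∈ Ap ∪ An, ∀ γ₂ ∈ Ap ∪ An, p γ₁ < 0 → p γ₂ < 0 → γ₁ = γ₂)
        ∧ (∀ x : Fin n → ℝ, 0 ≤ expSum (Ap ∪ An) p x)) →
    (∀ γ ∈ Ap ∪ An, (l.map (fun p => p γ)).sum = c γ) →
    (∀ p ∈ l, ∀ β ∈ An, β ∉ B → p β ≤ 0) →
    0 ≤ (l.map (fun p => ∑ γ ∈ Ap ∪ An, v γ * p γ)).sum := by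
  classical
  intro B
  induction B using Finset.strongInduction with
  | _ B ihB =>
    intro hBsub
    rcases B.eq_empty_or_nonempty with rfl | ⟨β₀, hβ₀B⟩
    · intro l h1 h2 h3
      exact M2 hdisj hv0 hvc hcAp Ap (le_refl Ap) l h1 h2
        (fun p hp β hβ => h3 p hp β hβ (Finset.notMem_empty β))
        (fun p hp α hα hα' => absurd hα hα')
    · have hβ₀An : β₀ ∈ An := hBsub hβ₀B
      have hβ₀A : β₀ ∈ Ap ∪ An := Finset.mem_union_right _ hβ₀An
      suffices H : ∀ k : ℕ, ∀ l : Multiset ((Fin n → ℝ) → ℝ),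
          (∀ p ∈ l, (∀ γ₁ ∈ Ap ∪ An, ∀ γ₂ ∈ Ap ∪ An, p γ₁ < 0 → p γ₂ < 0 → γ₁ = γ₂)
              ∧ (∀ x : Fin n → ℝ, 0 ≤ expSum (Ap ∪ An) p x)) →
          (∀ γ ∈ Ap ∪ An, (l.map (fun p => p γ)).sum = c γ) →
          (∀ p ∈ l, ∀ β ∈ An, β ∉ B → p β ≤ 0) →
          (Multiset.card (l.filter (fun p => 0 < p β₀))
            + Multiset.card (l.filter (fun p => p β₀ < 0)) ≤ k) →
          0 ≤ (l.map (fun p => ∑ γ ∈ Ap ∪ An, v γ * p γ)).sum by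
        intro l h1 h2 h3
        exact H _ l h1 h2 h3 le_rfl
      intro k
      induction k with
      | zero =>
        intro l h1 h2 h3 hk
        have hpos0 : l.filter (fun p => 0 < p β₀) = 0 := by
          rw [← Multiset.card_eq_zero]
          exact Nat.eq_zero_of_le_zero (le_trans (Nat.le_add_right _ _) hk)
        refine ihB (B.erase β₀) (Finset.erase_ssubset hβ₀B)
          ((Finset.erase_subset _ _).trans hBsub) l h1 h2 ?_
        intro p hp β hβ hβB
        by_cases hβ' : β = β₀
        · subst hβ'
          by_contra hgt
          push_neg at hgt
          have : p ∈ l.filter (fun p => 0 < p β) := Multiset.mem_filter.mpr ⟨hp, hgt⟩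
          rw [hpos0] at this
          exact absurd this (Multiset.notMem_zero p)
        · exact h3 p hp β hβ fun hB' => hβB (Finset.mem_erase.mpr ⟨hβ', hB'⟩)
      | succ k ihk =>
        intro l h1 h2 h3 hk
        by_cases hpos0 : l.filter (fun p => 0 < p β₀) = 0
        · refine ihB (B.erase β₀) (Finset.erase_ssubset hβ₀B)
            ((Finset.erase_subset _ _).trans hBsub) l h1 h2 ?_
          intro p hp β hβ hβB
          by_cases hβ' : β = β₀
          · subst hβ'
            by_contra hgt
            push_neg at hgt
            have : p ∈ l.filter (fun p => 0 < p β) := Multiset.mem_filter.mpr ⟨hp, hgt⟩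
            rw [hpos0] at this
            exact absurd this (Multiset.notMem_zero p)
          · exact h3 p hp β hβ fun hB' => hβB (Finset.mem_erase.mpr ⟨hβ', hB'⟩)
        · obtain ⟨pp, hppf⟩ := Multiset.exists_mem_of_ne_zero hpos0
          have hppl : pp ∈ l := Multiset.mem_of_mem_filter hppf
          have hpppos : 0 < pp β₀ := (Multiset.mem_filter.mp hppf).2
          -- find a piece with a negative entry at β₀
          have hex : ∃ pn ∈ l.erase pp, pn β₀ < 0 := by
            by_contra hno
            push_neg at hno
            have hsum := h2 β₀ hβ₀A
            rw [← Multiset.cons_erase hppl, Multiset.map_cons, Multiset.sum_cons] at hsum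
            have hrest : 0 ≤ ((l.erase pp).map (fun p => p β₀)).sum := by
              refine multiset_sum_nonneg _ fun a ha => ?_
              obtain ⟨p, hp, rfl⟩ := Multiset.mem_map.mp ha
              exact not_lt.mp (by exact fun h => absurd h (by exact not_lt.mpr (hno p hp)))
            have := hcAn β₀ hβ₀An
            linarith
          obtain ⟨pn, hpnl', hpnneg⟩ := hex
          have hpnl : pn ∈ l := Multiset.mem_of_mem_erase hpnl'
          set rest : Multiset ((Fin n → ℝ) → ℝ) := (l.erase pp).erase pn with hrest
          have hldecomp : l = pp ::ₘ pn ::ₘ rest := by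
            rw [hrest, Multiset.cons_erase hpnl', Multiset.cons_erase hppl]
          have hpnuniq : ∀ γ ∈ Ap ∪ An, γ ≠ β₀ → 0 ≤ pn γ := by
            intro γ hγ hne
            by_contra hneg
            push_neg at hneg
            exact hne ((h1 pn hpnl).1 γ hγ β₀ hβ₀A hneg hpnneg)
          -- case distinction on whether pp is fully absorbed
          by_cases hcase : pp β₀ + pn β₀ ≤ 0
          · -- partial absorption
            obtain ⟨t, htdef⟩ : ∃ t : ℝ, t = pp β₀ / (-pn β₀) := ⟨_, rfl⟩
            have htpos : 0 < t := by
              rw [htdef]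
              exact div_pos hpppos (by linarith)
            have ht1 : t ≤ 1 := by
              rw [htdef, div_le_one (by linarith)]
              linarith
            set pm : (Fin n → ℝ) → ℝ := fun γ => pp γ + t * pn γ with hpm
            set p2 : (Fin n → ℝ) → ℝ := fun γ => (1 - t) * pn γ with hp2
            have hne : pn β₀ ≠ 0 := ne_of_lt hpnneg
            have hpmβ₀ : pm β₀ = 0 := by
              have hkey : t * pn β₀ = -pp β₀ := by
                rw [htdef, div_mul_eq_mul_div, mul_div_assoc, div_neg, div_self hne]
                ring
              rw [hpm]
              show pp β₀ + t * pn β₀ = 0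
              rw [hkey]
              ring
            set l' : Multiset ((Fin n → ℝ) → ℝ) := pm ::ₘ p2 ::ₘ rest with hl'
            have hres := ihk l' ?_ ?_ ?_ ?_
            · have heq : (l'.map (fun p => ∑ γ ∈ Ap ∪ An, v γ * p γ)).sum
                  = (l.map (fun p => ∑ γ ∈ Ap ∪ An, v γ * p γ)).sum := by
                rw [hldecomp, hl']
                simp only [Multiset.map_cons, Multiset.sum_cons]
                rw [show (∑ γ ∈ Ap ∪ An, v γ * pm γ)
                    = (∑ γ ∈ Ap ∪ An, v γ * pp γ) + t * ∑ γ ∈ Ap ∪ An, v γ * pn γ from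
                  pr_addMul _ _ _ _ _]
                rw [show (∑ γ ∈ Ap ∪ An, v γ * p2 γ)
                    = (1 - t) * ∑ γ ∈ Ap ∪ An, v γ * pn γ from pr_smul _ _ _ _]
                ring
              rw [← heq]
              exact hres
            · -- h1 for l'
              intro p' hp'
              rw [hl'] at hp'
              rcases Multiset.mem_cons.mp hp' with rfl | hp'
              · constructor
                · intro γ₁ hγ₁ γ₂ hγ₂ hn₁ hn₂
                  have key : ∀ γ ∈ Ap ∪ An, pm γ < 0 → pp γ < 0 := by
                    intro γ hγ hneg
                    have hne : γ ≠ β₀ := by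
                      intro hh; subst hh
                      rw [hpmβ₀] at hneg
                      exact lt_irrefl 0 hneg
                    have h0 : 0 ≤ pn γ := hpnuniq γ hγ hne
                    rw [hpm] at hneg
                    simp only [] at hneg
                    nlinarith
                  exact (h1 pp hppl).1 γ₁ hγ₁ γ₂ hγ₂ (key γ₁ hγ₁ hn₁) (key γ₂ hγ₂ hn₂)
                · intro x
                  rw [hpm]
                  rw [show expSum (Ap ∪ An) (fun γ => pp γ + t * pn γ) x
                      = expSum (Ap ∪ An) pp x + t * expSum (Ap ∪ An) pn x from
                    expSum_addMul _ _ _ _ _]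
                  have := (h1 pp hppl).2 x
                  have h2' := (h1 pn hpnl).2 x
                  nlinarith
              rcases Multiset.mem_cons.mp hp' with rfl | hp'
              · constructor
                · intro γ₁ hγ₁ γ₂ hγ₂ hn₁ hn₂
                  have key : ∀ γ ∈ Ap ∪ An, p2 γ < 0 → pn γ < 0 := by
                    intro γ hγ hneg
                    rw [hp2] at hneg
                    simp only [] at hneg
                    by_contra hge
                    push_neg at hge
                    nlinarith
                  exact (h1 pn hpnl).1 γ₁ hγ₁ γ₂ hγ₂ (key γ₁ hγ₁ hn₁) (key γ₂ hγ₂ hn₂)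
                · intro x
                  rw [hp2]
                  rw [show expSum (Ap ∪ An) (fun γ => (1 - t) * pn γ) x
                      = (1 - t) * expSum (Ap ∪ An) pn x from expSum_smul _ _ _ _]
                  have h2' := (h1 pn hpnl).2 x
                  nlinarith
              · exact h1 p' (mem_of_rest hldecomp hp')
            · -- h2 for l'
              intro γ hγ
              have := h2 γ hγ
              rw [hldecomp] at this
              rw [hl']
              simp only [Multiset.map_cons, Multiset.sum_cons] at this ⊢
              rw [hpm, hp2]
              simp only []
              linarith [this]
            · -- h3 for l'
              intro p' hp' β hβ hβB
              rw [hl'] at hp'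
              rcases Multiset.mem_cons.mp hp' with rfl | hp'
              · rw [hpm]
                simp only []
                have ha := h3 pp hppl β hβ hβB
                have hb := h3 pn hpnl β hβ hβB
                nlinarith
              rcases Multiset.mem_cons.mp hp' with rfl | hp'
              · rw [hp2]
                simp only []
                have hb := h3 pn hpnl β hβ hβB
                nlinarith
              · exact h3 p' (mem_of_rest hldecomp hp') β hβ hβB
            · -- measure decreases
              have hmeas : Multiset.card (l.filter (fun p => 0 < p β₀))
                  + Multiset.card (l.filter (fun p => p β₀ < 0))
                  = (Multiset.card (rest.filter (fun p => 0 < p β₀))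
                    + Multiset.card (rest.filter (fun p => p β₀ < 0))) + 2 := by
                rw [hldecomp]
                rw [Multiset.filter_cons_of_pos (p := fun p => 0 < p β₀)
                    (s := pn ::ₘ rest) hpppos,
                  Multiset.filter_cons_of_neg (p := fun p => 0 < p β₀) (s := rest)
                    (not_lt.mpr hpnneg.le),
                  Multiset.filter_cons_of_neg (p := fun p => p β₀ < 0) (s := pn ::ₘ rest)
                    (not_lt.mpr hpppos.le),
                  Multiset.filter_cons_of_pos (p := fun p => p β₀ < 0) (s := rest) hpnneg]
                simp only [Multiset.card_cons]
                ring
              have hmeas' : Multiset.card (l'.filter (fun p => 0 < p β₀))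
                  + Multiset.card (l'.filter (fun p => p β₀ < 0))
                  ≤ (Multiset.card (rest.filter (fun p => 0 < p β₀))
                    + Multiset.card (rest.filter (fun p => p β₀ < 0))) + 1 := by
                rw [hl']
                rw [Multiset.filter_cons_of_neg (p := fun p => 0 < p β₀) (s := p2 ::ₘ rest)
                    (not_lt.mpr (le_of_eq hpmβ₀)),
                  Multiset.filter_cons_of_neg (p := fun p => p β₀ < 0) (s := p2 ::ₘ rest)
                    (not_lt.mpr (ge_of_eq hpmβ₀))]
                by_cases hp2pos : 0 < p2 β₀
                · rw [Multiset.filter_cons_of_pos (p := fun p => 0 < p β₀) (s := rest) hp2pos,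
                    Multiset.filter_cons_of_neg (p := fun p => p β₀ < 0) (s := rest)
                      (not_lt.mpr hp2pos.le)]
                  simp only [Multiset.card_cons]
                  exact le_of_eq (by ring)
                · rw [Multiset.filter_cons_of_neg (p := fun p => 0 < p β₀) (s := rest) hp2pos]
                  by_cases hp2neg : p2 β₀ < 0
                  · rw [Multiset.filter_cons_of_pos (p := fun p => p β₀ < 0) (s := rest) hp2neg]
                    simp only [Multiset.card_cons]
                    exact le_of_eq (by ring)
                  · rw [Multiset.filter_cons_of_neg (p := fun p => p β₀ < 0) (s := rest) hp2neg]
                    exact Nat.le_succ _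
              rw [hmeas] at hk
              refine le_trans hmeas' ?_
              linarith
          · -- full absorption
            push_neg at hcase
            set pm : (Fin n → ℝ) → ℝ := fun γ => pp γ + pn γ with hpm
            set l' : Multiset ((Fin n → ℝ) → ℝ) := pm ::ₘ rest with hl'
            have hres := ihk l' ?_ ?_ ?_ ?_
            · have heq : (l'.map (fun p => ∑ γ ∈ Ap ∪ An, v γ * p γ)).sum
                  = (l.map (fun p => ∑ γ ∈ Ap ∪ An, v γ * p γ)).sum := by
                rw [hldecomp, hl']
                simp only [Multiset.map_cons, Multiset.sum_cons]
                have : (∑ γ ∈ Ap ∪ An, v γ * pm γ)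
                    = (∑ γ ∈ Ap ∪ An, v γ * pp γ) + 1 * ∑ γ ∈ Ap ∪ An, v γ * pn γ := by
                  rw [← pr_addMul]
                  exact Finset.sum_congr rfl fun γ _ => by rw [hpm]; simp only []; ring
                rw [this]
                ring
              rw [← heq]
              exact hres
            · intro p' hp'
              rw [hl'] at hp'
              rcases Multiset.mem_cons.mp hp' with rfl | hp'
              · constructor
                · intro γ₁ hγ₁ γ₂ hγ₂ hn₁ hn₂
                  have key : ∀ γ ∈ Ap ∪ An, pm γ < 0 → pp γ < 0 := by
                    intro γ hγ hneg
                    have hne : γ ≠ β₀ := by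
                      intro hh; subst hh
                      rw [hpm] at hneg
                      simp only [] at hneg
                      linarith
                    have h0 : 0 ≤ pn γ := hpnuniq γ hγ hne
                    rw [hpm] at hneg
                    simp only [] at hneg
                    linarith
                  exact (h1 pp hppl).1 γ₁ hγ₁ γ₂ hγ₂ (key γ₁ hγ₁ hn₁) (key γ₂ hγ₂ hn₂)
                · intro x
                  rw [hpm]
                  rw [show expSum (Ap ∪ An) (fun γ => pp γ + pn γ) x
                      = expSum (Ap ∪ An) (fun γ => pp γ + 1 * pn γ) x from by
                    congr 1; funext γ; ring]
                  rw [show expSum (Ap ∪ An) (fun γ => pp γ + 1 * pn γ) x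
                      = expSum (Ap ∪ An) pp x + 1 * expSum (Ap ∪ An) pn x from
                    expSum_addMul _ _ _ _ _]
                  have := (h1 pp hppl).2 x
                  have h2' := (h1 pn hpnl).2 x
                  linarith
              · exact h1 p' (mem_of_rest hldecomp hp')
            · intro γ hγ
              have := h2 γ hγ
              rw [hldecomp] at this
              rw [hl']
              simp only [Multiset.map_cons, Multiset.sum_cons] at this ⊢
              rw [hpm]
              simp only []
              linarith [this]
            · intro p' hp' β hβ hβB
              rw [hl'] at hp'
              rcases Multiset.mem_cons.mp hp' with rfl | hp'
              · rw [hpm]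
                simp only []
                have ha := h3 pp hppl β hβ hβB
                have hb := h3 pn hpnl β hβ hβB
                linarith
              · exact h3 p' (mem_of_rest hldecomp hp') β hβ hβB
            · have hmeas : Multiset.card (l.filter (fun p => 0 < p β₀))
                  + Multiset.card (l.filter (fun p => p β₀ < 0))
                  = (Multiset.card (rest.filter (fun p => 0 < p β₀))
                    + Multiset.card (rest.filter (fun p => p β₀ < 0))) + 2 := by
                rw [hldecomp]
                rw [Multiset.filter_cons_of_pos (p := fun p => 0 < p β₀)
                    (s := pn ::ₘ rest) hpppos,
                  Multiset.filter_cons_of_neg (p := fun p => 0 < p β₀) (s := rest)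
                    (not_lt.mpr hpnneg.le),
                  Multiset.filter_cons_of_neg (p := fun p => p β₀ < 0) (s := pn ::ₘ rest)
                    (not_lt.mpr hpppos.le),
                  Multiset.filter_cons_of_pos (p := fun p => p β₀ < 0) (s := rest) hpnneg]
                simp only [Multiset.card_cons]
                ring
              have hpmβ₀pos : 0 < pm β₀ := by
                rw [hpm]; simp only []; linarith
              have hmeas' : Multiset.card (l'.filter (fun p => 0 < p β₀))
                  + Multiset.card (l'.filter (fun p => p β₀ < 0))
                  = (Multiset.card (rest.filter (fun p => 0 < p β₀))
                    + Multiset.card (rest.filter (fun p => p β₀ < 0))) + 1 := by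
                rw [hl']
                rw [Multiset.filter_cons_of_pos (p := fun p => 0 < p β₀) (s := rest) hpmβ₀pos,
                  Multiset.filter_cons_of_neg (p := fun p => p β₀ < 0) (s := rest)
                    (not_lt.mpr hpmβ₀pos.le)]
                simp only [Multiset.card_cons]
                ring
              rw [hmeas] at hk
              rw [hmeas']
              linarith
end DualSage

/-- Description of the dual of the signed SONC cone via weighted geometric
means over barycentric coordinates. -/
theorem dual_sage_description {n : ℕ}
    (Ap An : Finset (Fin n → ℝ)) (hdisj : Disjoint Ap An)
    (hAp : Ap.Nonempty) (hAn : An.Nonempty) :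
    dualCone (Ap ∪ An) {c | InSAGE Ap An c}
      = {v | (∀ α ∈ Ap, 0 ≤ v α) ∧
          ∀ β ∈ An, ∀ lam : (Fin n → ℝ) → ℝ, IsBary Ap β lam →
            v β ≤ ∏ α ∈ Ap, v α ^ lam α} := by
  classical
  ext v
  constructor
  · intro hv
    exact ⟨fun α hα => DualSage.dual_nonneg_Ap hdisj hv hα,
      fun β hβ lam hlam => DualSage.dual_bary_bound hdisj hv hβ hlam⟩
  · rintro ⟨hv1, hv2⟩ c hc
    obtain ⟨hcAp, hcAn, m, d, hsum, huniq, hnn⟩ := hc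
    -- replace `v` by its nonnegative part `w`
    set w : (Fin n → ℝ) → ℝ := fun γ => max (v γ) 0 with hw
    have hw0 : ∀ γ, 0 ≤ w γ := fun γ => le_max_right _ _
    have hwAp : ∀ α ∈ Ap, w α = v α := fun α hα => max_eq_left (hv1 α hα)
    have hwc : ∀ β ∈ An, ∀ lam : (Fin n → ℝ) → ℝ, IsBary Ap β lam →
        w β ≤ ∏ α ∈ Ap, w α ^ lam α := by
      intro β hβ lam hlam
      have hprodeq : (∏ α ∈ Ap, w α ^ lam α) = ∏ α ∈ Ap, v α ^ lam α :=
        Finset.prod_congr rfl fun α hα => by rw [hwAp α hα]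
      rw [hprodeq, hw]
      refine max_le (hv2 β hβ lam hlam) ?_
      exact Finset.prod_nonneg fun α hα => Real.rpow_nonneg (hv1 α hα) _
    -- the initial multiset of AGE pieces
    set l₀ : Multiset ((Fin n → ℝ) → ℝ) := Multiset.map d Finset.univ.val with hl₀
    have hres := DualSage.M1 hdisj hw0 hwc hcAp hcAn An (le_refl An) l₀ ?_ ?_ ?_
    · -- transfer to the desired inequality
      have hwsum : 0 ≤ ∑ γ ∈ Ap ∪ An, w γ * c γ := by
        have h1 : (l₀.map (fun p => ∑ γ ∈ Ap ∪ An, w γ * p γ)).sum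
            = ∑ i : Fin m, ∑ γ ∈ Ap ∪ An, w γ * d i γ := by
          rw [hl₀, Multiset.map_map]
          rfl
        have h2 : (∑ i : Fin m, ∑ γ ∈ Ap ∪ An, w γ * d i γ)
            = ∑ γ ∈ Ap ∪ An, w γ * c γ := by
          rw [Finset.sum_comm]
          refine Finset.sum_congr rfl fun γ hγ => ?_
          rw [← Finset.mul_sum, ← hsum γ hγ]
        rw [h1, h2] at hres
        exact hres
      have hdiff : 0 ≤ ∑ γ ∈ Ap ∪ An, (v γ - w γ) * c γ := by
        rw [Finset.sum_union hdisj]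
        have hA : (∑ γ ∈ Ap, (v γ - w γ) * c γ) = 0 :=
          Finset.sum_eq_zero fun α hα => by rw [hwAp α hα]; ring
        rw [hA, zero_add]
        refine Finset.sum_nonneg fun β hβ => ?_
        have h1 : v β - w β ≤ 0 := by
          rw [hw]
          simp only []
          have := le_max_left (v β) 0
          linarith
        have h2 := hcAn β hβ
        nlinarith
      have : (∑ γ ∈ Ap ∪ An, v γ * c γ)
          = (∑ γ ∈ Ap ∪ An, w γ * c γ) + ∑ γ ∈ Ap ∪ An, (v γ - w γ) * c γ := by
        rw [← Finset.sum_add_distrib]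
        exact Finset.sum_congr rfl fun γ _ => by ring
      rw [this]
      linarith
    · -- h1 : pieces are AGE
      intro p hp
      obtain ⟨i, _, rfl⟩ := Multiset.mem_map.mp hp
      exact ⟨huniq i, hnn i⟩
    · -- h2 : the pieces sum to `c`
      intro γ hγ
      rw [hl₀, Multiset.map_map]
      rw [show ((Multiset.map ((fun p => p γ) ∘ d) Finset.univ.val).sum)
          = ∑ i : Fin m, d i γ from rfl]
      exact (hsum γ hγ).symm
    · -- h3 : vacuous for B = An
      intro p hp β hβ hβB
      exact absurd hβ hβB
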